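/- Let X be a metric space, let (ν_n) be a sequence of finite Borel measures on X and ν a finite Borel measure on X. Then the following are equivalent: (I) ν_n converges to ν setwise, i.e., lim_{n→∞} ν_n(A) = ν(A) for every Borel set A ⊆ X; (II) lim_{n→∞} ν_n(B) = ν(B) for every open set B ⊆ X; (III) lim_{n→∞} ν_n(A) = ν(A) for every closed set A ⊆ X. -/

import Mathlib

open MeasureTheory Filter Topology

/-- Feinberg-Kasyanov-Zgurovsky: on a metric space, setwise convergence is equivalent to
convergence on all open sets, and to convergence on all closed sets. -/
theorem stmt5 {X : Type*} [MetricSpace X] [MeasurableSpace X] [BorelSpace X]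
    (ν : ℕ → Measure X) (μ : Measure X)
    (hν : ∀ n, IsFiniteMeasure (ν n)) (hμ : IsFiniteMeasure μ) :
    List.TFAE
      [∀ A : Set X, MeasurableSet A → Tendsto (fun n => ν n A) atTop (𝓝 (μ A)),
       ∀ B : Set X, IsOpen B → Tendsto (fun n => ν n B) atTop (𝓝 (μ B)),
       ∀ A : Set X, IsClosed A → Tendsto (fun n => ν n A) atTop (𝓝 (μ A))] := by
  haveI := hμ
  haveI : μ.WeaklyRegular := Measure.WeaklyRegular.of_pseudoMetrizableSpace_of_isFiniteMeasure μ
  have compl_arg : (∀ B : Set X, IsOpen B → Tendsto (fun n => ν n B) atTop (𝓝 (μ B))) →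
      ∀ A : Set X, IsClosed A → Tendsto (fun n => ν n A) atTop (𝓝 (μ A)) := by
    intro h2 A hA
    have hu : Tendsto (fun n => ν n Set.univ) atTop (𝓝 (μ Set.univ)) :=
      h2 _ isOpen_univ
    have hc : Tendsto (fun n => ν n Aᶜ) atTop (𝓝 (μ Aᶜ)) := h2 _ hA.isOpen_compl
    have key : ∀ (m : Measure X) (_ : IsFiniteMeasure m), m A = m Set.univ - m Aᶜ := by
      intro m hm
      haveI := hm
      rw [measure_compl hA.measurableSet (measure_ne_top m _),
        ENNReal.sub_sub_cancel (measure_ne_top m _) (measure_mono (Set.subset_univ A))]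
    have : Tendsto (fun n => ν n Set.univ - ν n Aᶜ) atTop (𝓝 (μ Set.univ - μ Aᶜ)) :=
      ENNReal.Tendsto.sub hu hc (Or.inr (measure_ne_top μ _))
    rw [key μ hμ]
    exact this.congr fun n => (key (ν n) (hν n)).symm
  tfae_have 1 → 2 := fun h B hB => h B hB.measurableSet
  tfae_have 2 → 3 := compl_arg
  tfae_have 3 → 2 := by
    intro h3 B hB
    have hu : Tendsto (fun n => ν n Set.univ) atTop (𝓝 (μ Set.univ)) :=
      h3 _ isClosed_univ
    have hc : Tendsto (fun n => ν n Bᶜ) atTop (𝓝 (μ Bᶜ)) := h3 _ hB.isClosed_compl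
    have key : ∀ (m : Measure X) (_ : IsFiniteMeasure m), m B = m Set.univ - m Bᶜ := by
      intro m hm
      haveI := hm
      rw [measure_compl hB.measurableSet (measure_ne_top m _),
        ENNReal.sub_sub_cancel (measure_ne_top m _) (measure_mono (Set.subset_univ B))]
    have : Tendsto (fun n => ν n Set.univ - ν n Bᶜ) atTop (𝓝 (μ Set.univ - μ Bᶜ)) :=
      ENNReal.Tendsto.sub hu hc (Or.inr (measure_ne_top μ _))
    rw [key μ hμ]
    exact this.congr fun n => (key (ν n) (hν n)).symm
  tfae_have 2 → 1 := by
    intro h2 A hA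
    have h3 := compl_arg h2
    refine tendsto_of_le_liminf_of_limsup_le ?_ ?_
      (isBoundedUnder_of ⟨⊤, fun n => le_top⟩) (isBoundedUnder_of ⟨0, fun n => zero_le⟩)
    · -- μ A ≤ liminf via inner regularity by closed sets
      rw [hA.measure_eq_iSup_isClosed_of_ne_top (measure_ne_top μ A)]
      refine iSup₂_le fun F hF => iSup_le fun hFc => ?_
      calc μ F = liminf (fun n => ν n F) atTop := ((h3 F hFc).liminf_eq).symm
        _ ≤ liminf (fun n => ν n A) atTop :=
            liminf_le_liminf (Eventually.of_forall fun n => measure_mono hF)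
    · -- limsup ≤ μ A via outer regularity
      rw [A.measure_eq_iInf_isOpen]
      refine le_iInf₂ fun U hU => le_iInf fun hUo => ?_
      calc limsup (fun n => ν n A) atTop ≤ limsup (fun n => ν n U) atTop :=
            limsup_le_limsup (Eventually.of_forall fun n => measure_mono hU)
        _ = μ U := (h2 U hUo).limsup_eq
  tfae_finish
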